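/- arXiv:2401.14862 — 3 statements merged into one kernel-verified Lean document; each statement's English description precedes it below -/
import Mathlib

section
/- An automorphism γ of the infinite rooted binary tree is an odometer (i.e., acts as a single 2^n-cycle on each level n) if and only if for every n ≥ 1 the sign of the permutation induced by γ on level n is −1. -/
namespace BinTree

/-- Vertices of the infinite rooted binary tree: finite words over `{0,1}`. -/
abbrev Vertex : Type := List Bool

/-- A function on vertices is a tree automorphism function if it preserves lengths
(levels) and prefixes. -/
def IsTreeAutFun (f : Vertex → Vertex) : Prop :=
  (∀ v, (f v).length = v.length) ∧ ∀ v w : Vertex, (f (v ++ w)).take v.length = f v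

/-- `Ω`: the automorphism group of the infinite rooted binary tree, realized as the
subgroup of permutations of the set of vertices preserving the tree structure. -/
def TreeAut : Subgroup (Equiv.Perm Vertex) where
  carrier := {e | IsTreeAutFun ⇑e}
  one_mem' := ⟨fun _ => rfl, fun v w => by
    simpa using List.take_left (l₁ := v) (l₂ := w)⟩
  mul_mem' := by
    rintro a b ha hb
    obtain ⟨ha1, ha2⟩ := ha
    obtain ⟨hb1, hb2⟩ := hb
    refine ⟨fun v => ?_, fun v w => ?_⟩
    · simp [Equiv.Perm.mul_apply, ha1, hb1]
    · have hb' : b (v ++ w) = b v ++ (b (v ++ w)).drop v.length := by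
        conv_lhs => rw [← List.take_append_drop v.length (b (v ++ w)), hb2]
      have hlen : (b v).length = v.length := hb1 v
      calc ((a * b) (v ++ w)).take v.length
          = (a (b v ++ (b (v ++ w)).drop v.length)).take v.length := by
            rw [Equiv.Perm.mul_apply, ← hb']
        _ = a (b v) := by rw [← hlen]; exact ha2 _ _
        _ = (a * b) v := rfl
  inv_mem' := by
    intro a ha
    obtain ⟨ha1, ha2⟩ := ha
    show IsTreeAutFun ⇑a⁻¹
    have hlen : ∀ v : Vertex, (a⁻¹ v).length = v.length := by
      intro v
      have h := ha1 (a⁻¹ v)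
      rw [show ∀ x, a (a⁻¹ x) = x from fun x => Equiv.apply_symm_apply a x] at h
      exact h.symm ▸ rfl
    refine ⟨hlen, fun v w => ?_⟩
    have htl : ((a⁻¹ (v ++ w)).take v.length).length = v.length := by
      rw [List.length_take, hlen, List.length_append]
      omega
    have key : a ((a⁻¹ (v ++ w)).take v.length) = v := by
      have h2 := ha2 ((a⁻¹ (v ++ w)).take v.length) ((a⁻¹ (v ++ w)).drop v.length)
      rw [List.take_append_drop, htl, show ∀ x, a (a⁻¹ x) = x from fun x => Equiv.apply_symm_apply a x] at h2
      rw [← h2]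
      simpa using List.take_left (l₁ := v) (l₂ := w)
    have h3 := congrArg (⇑a⁻¹) key
    rwa [show ∀ x, a⁻¹ (a x) = x from fun x => Equiv.symm_apply_apply a x] at h3

/-- wreath recursion, forward map: `(g,h)σᵗ` -/
def wrFun (g h : Vertex → Vertex) (t : Bool) : Vertex → Vertex
  | [] => []
  | x :: v => (xor x t) :: (cond x (h v) (g v))

/-- wreath recursion, inverse map -/
def wrFunInv (g h : Vertex → Vertex) (t : Bool) : Vertex → Vertex
  | [] => []
  | y :: w => (xor y t) :: (cond (xor y t) (h w) (g w))

/-- `(g,h)σᵗ` as a permutation of the vertices. -/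
def wrPerm (g h : Equiv.Perm Vertex) (t : Bool) : Equiv.Perm Vertex where
  toFun := wrFun ⇑g ⇑h t
  invFun := wrFunInv ⇑g.symm ⇑h.symm t
  left_inv := by
    intro v
    cases v with
    | nil => rfl
    | cons x v => cases x <;> cases t <;> simp [wrFun, wrFunInv]
  right_inv := by
    intro v
    cases v with
    | nil => rfl
    | cons x v => cases x <;> cases t <;> simp [wrFun, wrFunInv]

/-- The element `(g,h)σᵗ` of `Ω`: acts on the first level by `σᵗ` (where `σ` is the
swap of the two level-one subtrees), with section `g` at the vertex `0` and section
`h` at the vertex `1`.  Thus `(γ₀,γ₁)τ` of the wreath recursion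
`Ω ≃ (Ω × Ω) ⋊ S₂` is `wr γ₀ γ₁ t` (`t = true` iff `τ = σ`). -/
def wr (g h : TreeAut) (t : Bool) : TreeAut :=
  ⟨wrPerm g.1 h.1 t, by
    have hg : IsTreeAutFun ⇑g.1 := g.2
    have hh : IsTreeAutFun ⇑h.1 := h.2
    constructor
    · intro v
      cases v with
      | nil => rfl
      | cons x v =>
        cases x <;> simp [wrPerm, wrFun, hg.1, hh.1]
    · intro v w
      cases v with
      | nil => simp [wrPerm, wrFun]
      | cons x v =>
        cases x <;> simp [wrPerm, wrFun, hg.2, hh.2]⟩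

/-- Application of a tree automorphism to a vertex. -/
def ap (γ : TreeAut) (v : Vertex) : Vertex := γ.1 v

/-- The permutation induced by `γ ∈ Ω` on level `n` of the tree. -/
def levelPerm (n : ℕ) (γ : TreeAut) : Equiv.Perm (List.Vector Bool n) where
  toFun v := ⟨γ.1 v.1, by
    have h : IsTreeAutFun ⇑γ.1 := γ.2
    rw [h.1 v.1]; exact v.2⟩
  invFun v := ⟨γ.1.symm v.1, by
    have h : IsTreeAutFun ⇑γ.1 := γ.2
    have h2 := h.1 (γ.1.symm v.1)
    rw [Equiv.apply_symm_apply] at h2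
    exact h2.symm.trans v.2⟩
  left_inv v := Subtype.ext (Equiv.symm_apply_apply _ _)
  right_inv v := Subtype.ext (Equiv.apply_symm_apply _ _)

/-- Restriction to level `n` as a group homomorphism. -/
def levelHom (n : ℕ) : TreeAut →* Equiv.Perm (List.Vector Bool n) where
  toFun := levelPerm n
  map_one' := Equiv.ext fun v => Subtype.ext rfl
  map_mul' := fun g h => Equiv.ext fun v => Subtype.ext rfl

/-- `sgn_n`: the sign of the permutation induced on level `n`. -/
def sgn (n : ℕ) (γ : TreeAut) : ℤˣ := Equiv.Perm.sign (levelPerm n γ)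

/-- An odometer: acts as a single `2^n`-cycle on each level `n ≥ 1`. -/
def IsOdometer (γ : TreeAut) : Prop :=
  ∀ n : ℕ, 1 ≤ n → (levelPerm n γ).IsCycle ∧ (levelPerm n γ).support = Finset.univ

/-- The profinite topology on `Ω`: the coarsest topology making all level
restrictions (to the discrete finite groups) continuous. -/
instance : TopologicalSpace TreeAut :=
  ⨅ n : ℕ, TopologicalSpace.induced (levelPerm n) ⊥

/-- A vertex `w` is in a stable cycle of `γ` of length `k`: its `γ`-orbit has exactly
`k` elements, and for every level `m` above the level of `w`, all level-`m` vertices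
lying above this orbit are in one single `γ`-cycle (necessarily of length
`2^(m - n) * k`, which we record via the periodicity condition). -/
def InStableCycle (γ : TreeAut) (w : Vertex) (k : ℕ) : Prop :=
  0 < k ∧ ap (γ ^ k) w = w ∧ (∀ j : ℕ, 0 < j → j < k → ap (γ ^ j) w ≠ w) ∧
  (∀ u : Vertex, w.length < u.length → (∃ i : ℕ, u.take w.length = ap (γ ^ i) w) →
    (ap (γ ^ (2 ^ (u.length - w.length) * k)) u = u ∧
      ∀ u' : Vertex, u'.length = u.length →
        (∃ i : ℕ, u'.take w.length = ap (γ ^ i) w) → ∃ j : ℕ, ap (γ ^ j) u = u'))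

/-- Self-similar subgroup: closed under taking sections (here the section of `γ` at
the first-level vertex `x` is characterized by `(xv)γ = (x)γ ⬝ (v)γₓ`). -/
def SelfSimilar (H : Subgroup TreeAut) : Prop :=
  ∀ γ ∈ H, ∀ x : Bool, ∀ δ : TreeAut,
    (∀ v : Vertex, ap γ (x :: v) = ap γ [x] ++ ap δ v) → δ ∈ H

lemma take_ap {f : Vertex → Vertex} (hf : IsTreeAutFun f) (l : Vertex) (m : ℕ)
    (h : m ≤ l.length) : (f l).take m = f (l.take m) := by
  have h2 := hf.2 (l.take m) (l.drop m)
  rwa [List.take_append_drop, List.length_take, min_eq_left h] at h2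

/-- flip the last letter of a word -/
def flipLast : List Bool → List Bool
  | [] => []
  | [b] => [!b]
  | b :: c :: l => b :: flipLast (c :: l)

lemma flipLast_length (l : List Bool) : (flipLast l).length = l.length := by
  induction l with
  | nil => rfl
  | cons b l ih =>
    cases l with
    | nil => rfl
    | cons c m => simp only [flipLast, List.length_cons] at ih ⊢; omega

lemma flipLast_cons (b : Bool) (l : List Bool) (h : l ≠ []) :
    flipLast (b :: l) = b :: flipLast l := by
  cases l with
  | nil => exact absurd rfl h
  | cons c m => rfl

lemma flipLast_flipLast (l : List Bool) : flipLast (flipLast l) = l := by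
  induction l with
  | nil => rfl
  | cons b l ih =>
    cases l with
    | nil => simp [flipLast]
    | cons c m =>
      have hne : flipLast (c :: m) ≠ [] := by
        intro he; have := flipLast_length (c :: m); rw [he] at this; simp at this
      rw [flipLast_cons b _ (by simp), flipLast_cons b _ hne, ih]

lemma flipLast_ne (l : List Bool) (h : l ≠ []) : flipLast l ≠ l := by
  induction l with
  | nil => exact absurd rfl h
  | cons b l ih =>
    cases l with
    | nil => simp [flipLast]
    | cons c m =>
      simp only [flipLast, ne_eq, List.cons.injEq, not_and]
      intro _
      exact ih (by simp)

lemma take_flipLast (l : List Bool) (n : ℕ) (h : l.length = n + 1) :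
    (flipLast l).take n = l.take n := by
  induction l generalizing n with
  | nil => simp at h
  | cons b l ih =>
    cases l with
    | nil =>
      have : n = 0 := by simpa using h
      simp [this]
    | cons c m =>
      have hn : n = (c :: m).length := by simpa using h.symm
      obtain ⟨k, rfl⟩ : ∃ k, n = k + 1 := ⟨m.length, by simp [hn]⟩
      simp only [flipLast, List.take_succ_cons]
      rw [ih k (by simpa using hn.symm)]

lemma eq_or_flipLast (l l' : List Bool) (n : ℕ) (h : l.length = n + 1)
    (h' : l'.length = n + 1) (ht : l'.take n = l.take n) : l' = l ∨ l' = flipLast l := by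
  induction l generalizing l' n with
  | nil => simp at h
  | cons b l ih =>
    cases l' with
    | nil => simp at h'
    | cons b' t =>
      cases l with
      | nil =>
        have hn : n = 0 := by simpa using h
        have htn : t = [] := by subst hn; simpa [List.length_eq_zero_iff] using h'
        subst htn
        rcases Bool.eq_or_eq_not b' b with hb | hb
        · left; rw [hb]
        · right; rw [hb]; rfl
      | cons c m =>
        obtain ⟨k, rfl⟩ : ∃ k, n = k + 1 := ⟨m.length, by simpa using h.symm⟩
        simp only [List.take_succ_cons, List.cons.injEq] at ht
        obtain ⟨rfl, ht2⟩ := ht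
        rcases ih t k (by simpa using h) (by simpa using h') ht2 with h5 | h5
        · left; rw [h5]
        · right; rw [h5]; rfl



section Main

open Equiv.Perm

/-- projection to the previous level -/
def proj (n : ℕ) (v : List.Vector Bool (n+1)) : List.Vector Bool n :=
  ⟨v.1.take n, by rw [List.length_take, v.2]; omega⟩

/-- flip the last letter, as a map on level `n+1` -/
def flipVec (n : ℕ) (v : List.Vector Bool (n+1)) : List.Vector Bool (n+1) :=
  ⟨flipLast v.1, by rw [flipLast_length, v.2]⟩

lemma flipVec_flipVec (n : ℕ) (v : List.Vector Bool (n+1)) :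
    flipVec n (flipVec n v) = v := Subtype.ext (flipLast_flipLast _)

lemma flipVec_ne (n : ℕ) (v : List.Vector Bool (n+1)) : flipVec n v ≠ v := by
  intro h
  have hne : v.1 ≠ [] := by
    intro he; have h2 := v.2; rw [he] at h2; simp at h2
  exact flipLast_ne v.1 hne (congrArg Subtype.val h)

lemma proj_flipVec (n : ℕ) (v : List.Vector Bool (n+1)) :
    proj n (flipVec n v) = proj n v := Subtype.ext (take_flipLast v.1 n v.2)

lemma eq_or_flipVec (n : ℕ) (v w : List.Vector Bool (n+1))
    (h : proj n w = proj n v) : w = v ∨ w = flipVec n v := by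
  rcases eq_or_flipLast v.1 w.1 n v.2 w.2 (congrArg Subtype.val h) with h1 | h1
  · exact Or.inl (Subtype.ext h1)
  · exact Or.inr (Subtype.ext h1)

lemma proj_levelPerm (γ : TreeAut) (n : ℕ) (v : List.Vector Bool (n+1)) :
    proj n (levelPerm (n+1) γ v) = levelPerm n γ (proj n v) :=
  Subtype.ext (take_ap γ.2 v.1 n (by rw [v.2]; omega))

lemma proj_pow (γ : TreeAut) (n i : ℕ) (v : List.Vector Bool (n+1)) :
    proj n ((levelPerm (n+1) γ ^ i) v) = ((levelPerm n γ) ^ i) (proj n v) := by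
  induction i generalizing v with
  | zero => simp
  | succ i ih =>
    rw [pow_succ, Equiv.Perm.mul_apply, pow_succ, Equiv.Perm.mul_apply,
      ih ((levelPerm (n+1) γ) v), proj_levelPerm]

lemma levelPerm_flipVec (γ : TreeAut) (n : ℕ) (v : List.Vector Bool (n+1)) :
    levelPerm (n+1) γ (flipVec n v) = flipVec n (levelPerm (n+1) γ v) := by
  have h1 : proj n (levelPerm (n+1) γ (flipVec n v)) = proj n (levelPerm (n+1) γ v) := by
    rw [proj_levelPerm, proj_flipVec, proj_levelPerm]
  rcases eq_or_flipVec n _ _ h1 with h2 | h2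
  · exact absurd ((levelPerm (n+1) γ).injective h2) (flipVec_ne n v)
  · exact h2

lemma pow_flipVec (γ : TreeAut) (n i : ℕ) (v : List.Vector Bool (n+1)) :
    ((levelPerm (n+1) γ) ^ i) (flipVec n v) = flipVec n (((levelPerm (n+1) γ) ^ i) v) := by
  induction i generalizing v with
  | zero => simp
  | succ i ih => rw [pow_succ, Equiv.Perm.mul_apply, Equiv.Perm.mul_apply,
      levelPerm_flipVec, ih ((levelPerm (n+1) γ) v)]

lemma mul_pred_add (j k : ℕ) (hk : 0 < k) : j * (k - 1) + j = k * j := by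
  cases k with
  | zero => omega
  | succ m => simp [Nat.mul_succ, Nat.succ_mul, Nat.mul_comm]

/-- The induction predicate: the level-`n` permutation is transitive, every point has
period a multiple of `2^n`, and `2^n` is a period of every point. -/
def Pprop (γ : TreeAut) (n : ℕ) : Prop :=
  (∀ x y : List.Vector Bool n, ∃ i : ℕ, ((levelPerm n γ) ^ i) x = y) ∧
  (∀ (x : List.Vector Bool n) (j : ℕ), ((levelPerm n γ) ^ j) x = x → 2 ^ n ∣ j) ∧
  (∀ x : List.Vector Bool n, ((levelPerm n γ) ^ (2 ^ n)) x = x)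

lemma vector_zero_eq (x y : List.Vector Bool 0) : x = y :=
  Subtype.ext (by rw [List.length_eq_zero_iff.mp x.2, List.length_eq_zero_iff.mp y.2])

lemma Pprop_zero (γ : TreeAut) : Pprop γ 0 :=
  ⟨fun _ y => ⟨0, vector_zero_eq _ y⟩, fun _ j _ => by simpa using Nat.one_dvd j,
   fun x => vector_zero_eq _ x⟩

lemma Pprop_step (γ : TreeAut) (n : ℕ) (h : Pprop γ n) (hs : sgn (n+1) γ = -1) :
    Pprop γ (n+1) := by
  obtain ⟨h1, h2, h3⟩ := h
  set τ := levelPerm (n+1) γ with hτdef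
  set k := 2 ^ n with hkdef
  have hk : 0 < k := by positivity
  set v₀ : List.Vector Bool (n+1) := ⟨List.replicate (n+1) false, by simp⟩ with hv₀
  have hcomm : ∀ (a b : ℕ) (w : List.Vector Bool (n+1)),
      (τ ^ a) ((τ ^ b) w) = (τ ^ b) ((τ ^ a) w) := by
    intro a b w
    rw [← Equiv.Perm.mul_apply, ← Equiv.Perm.mul_apply, ← pow_add, ← pow_add]
    exact congrArg (fun m => (τ ^ m) w) (Nat.add_comm a b)
  have cover : ∀ w : List.Vector Bool (n+1),
      (∃ i : ℕ, (τ ^ i) v₀ = w) ∨ (∃ i : ℕ, (τ ^ i) (flipVec n v₀) = w) := by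
    intro w
    obtain ⟨i, hi⟩ := h1 (proj n v₀) (proj n w)
    have hpr : proj n w = proj n ((τ ^ i) v₀) := by rw [proj_pow]; exact hi.symm
    rcases eq_or_flipVec n _ w hpr with h4 | h4
    · exact Or.inl ⟨i, h4.symm⟩
    · exact Or.inr ⟨i, by rw [pow_flipVec, ← h4]⟩
  have hπk : proj n ((τ ^ k) v₀) = proj n v₀ := by rw [proj_pow]; exact h3 _
  rcases eq_or_flipVec n v₀ ((τ ^ k) v₀) hπk with hA | hB
  · -- impossible case: `τ ^ k` fixes `v₀`, so `τ` has two cycles and sign `1`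
    exfalso
    have hfix : ∀ w, (τ ^ k) w = w := by
      intro w
      rcases cover w with ⟨i, rfl⟩ | ⟨i, rfl⟩
      · rw [hcomm, hA]
      · rw [hcomm, pow_flipVec, hA]
    have hfixmul : ∀ (q : ℕ) (w : List.Vector Bool (n+1)), (τ ^ (k * q)) w = w := by
      intro q
      induction q with
      | zero => intro w; simp
      | succ q ih =>
        intro w
        rw [Nat.mul_succ, pow_add, Equiv.Perm.mul_apply, hfix, ih]
    have hnot : ∀ m : ℕ, (τ ^ m) v₀ ≠ flipVec n v₀ := by
      intro m hm
      have hproj : ((levelPerm n γ) ^ m) (proj n v₀) = proj n v₀ := by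
        rw [← proj_pow, hm, proj_flipVec]
      obtain ⟨q, rfl⟩ := h2 _ m hproj
      rw [hfixmul] at hm
      exact flipVec_ne n v₀ hm.symm
    have hmemA : ∀ w, τ.SameCycle v₀ w ↔ ∃ i : ℕ, (τ ^ i) v₀ = w := by
      intro w
      constructor
      · intro hsc
        obtain ⟨i, _, hi⟩ := hsc.exists_pow_eq'
        exact ⟨i, hi⟩
      · rintro ⟨i, rfl⟩
        exact ⟨(i : ℤ), by simp [zpow_natCast]⟩
    have hmemB : ∀ w, τ.SameCycle (flipVec n v₀) w ↔ ∃ i : ℕ, (τ ^ i) (flipVec n v₀) = w := by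
      intro w
      constructor
      · intro hsc
        obtain ⟨i, _, hi⟩ := hsc.exists_pow_eq'
        exact ⟨i, hi⟩
      · rintro ⟨i, rfl⟩
        exact ⟨(i : ℤ), by simp [zpow_natCast]⟩
    have hdisj : ∀ w, (∃ i : ℕ, (τ ^ i) v₀ = w) → ¬ τ.SameCycle (flipVec n v₀) w := by
      rintro w ⟨i, rfl⟩ hsc
      obtain ⟨j, hj⟩ := (hmemB _).mp hsc
      have h5 : (τ ^ (j * (k - 1) + i)) v₀ = flipVec n v₀ := by
        rw [pow_add, Equiv.Perm.mul_apply, ← hj, ← Equiv.Perm.mul_apply, ← pow_add]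
        rw [mul_pred_add j k hk, hfixmul]
      exact hnot _ h5
    have hnotA : ∀ m : ℕ, ¬ τ.SameCycle v₀ ((τ ^ m) (flipVec n v₀)) := by
      intro m hsc
      obtain ⟨j, hj⟩ := (hmemA _).mp hsc
      exact hdisj _ ⟨j, hj⟩ ((hmemB _).mpr ⟨m, rfl⟩)
    set sP : Equiv.Perm (List.Vector Bool (n+1)) :=
      ⟨flipVec n, flipVec n, flipVec_flipVec n, flipVec_flipVec n⟩ with hsPdef
    set c := τ.cycleOf v₀ with hcdef
    have hsPapp : ∀ w, sP w = flipVec n w := fun _ => rfl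
    have hsPinv : ∀ w, sP⁻¹ w = flipVec n w := fun _ => rfl
    have hdecomp : τ = c * (sP * c * sP⁻¹) := by
      ext w
      rcases cover w with ⟨i, rfl⟩ | ⟨i, rfl⟩
      · have hwA : τ.SameCycle v₀ ((τ ^ i) v₀) := (hmemA _).mpr ⟨i, rfl⟩
        have hfB : ¬ τ.SameCycle v₀ (flipVec n ((τ ^ i) v₀)) := by
          rw [← pow_flipVec]
          exact hnotA i
        have hc1 : c (flipVec n ((τ ^ i) v₀)) = flipVec n ((τ ^ i) v₀) := by
          rw [hcdef, Equiv.Perm.cycleOf_apply, if_neg hfB]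
        have hc2 : c ((τ ^ i) v₀) = τ ((τ ^ i) v₀) := by
          rw [hcdef, Equiv.Perm.cycleOf_apply, if_pos hwA]
        simp only [Equiv.Perm.mul_apply, hsPapp, hsPinv]
        rw [hc1, flipVec_flipVec, hc2]
      · have hflipw : flipVec n ((τ ^ i) (flipVec n v₀)) = (τ ^ i) v₀ := by
          rw [pow_flipVec, flipVec_flipVec]
        have hwA : τ.SameCycle v₀ ((τ ^ i) v₀) := (hmemA _).mpr ⟨i, rfl⟩
        have hc3 : c ((τ ^ i) v₀) = τ ((τ ^ i) v₀) := by
          rw [hcdef, Equiv.Perm.cycleOf_apply, if_pos hwA]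
        have hstep : flipVec n (τ ((τ ^ i) v₀)) = τ ((τ ^ i) (flipVec n v₀)) := by
          rw [pow_flipVec, levelPerm_flipVec]
        have hfB2 : ¬ τ.SameCycle v₀ (τ ((τ ^ i) (flipVec n v₀))) := by
          have : τ ((τ ^ i) (flipVec n v₀)) = (τ ^ (i + 1)) (flipVec n v₀) := by
            rw [pow_succ', Equiv.Perm.mul_apply]
          rw [this]
          exact hnotA (i + 1)
        have hc4 : c (τ ((τ ^ i) (flipVec n v₀))) = τ ((τ ^ i) (flipVec n v₀)) := by
          rw [hcdef, Equiv.Perm.cycleOf_apply, if_neg hfB2]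
        simp only [Equiv.Perm.mul_apply, hsPapp, hsPinv]
        rw [hflipw, hc3, hstep, hc4]
    have hs' : Equiv.Perm.sign τ = -1 := hs
    have hsign := congrArg Equiv.Perm.sign hdecomp
    rw [map_mul, map_mul, map_mul, map_inv] at hsign
    rw [mul_comm (Equiv.Perm.sign sP) (Equiv.Perm.sign c), mul_inv_cancel_right,
      ← sq, Int.units_sq] at hsign
    rw [hs'] at hsign
    exact absurd hsign (by decide)
  · -- good case: `τ ^ k` sends `v₀` to its sibling, so `τ` is a `2 ^ (n+1)`-cycle
    have h2k : (τ ^ (2 * k)) v₀ = v₀ := by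
      rw [two_mul, pow_add, Equiv.Perm.mul_apply, hB, pow_flipVec, hB, flipVec_flipVec]
    have h2kmul : ∀ q : ℕ, (τ ^ (2 * k * q)) v₀ = v₀ := by
      intro q
      induction q with
      | zero => simp
      | succ q ih => rw [Nat.mul_succ, pow_add, Equiv.Perm.mul_apply, h2k, ih]
    have hall : ∀ w, ∃ i : ℕ, (τ ^ i) v₀ = w := by
      intro w
      rcases cover w with hi | ⟨i, hi⟩
      · exact hi
      · exact ⟨i + k, by rw [pow_add, Equiv.Perm.mul_apply, hB, hi]⟩
    refine ⟨?_, ?_, ?_⟩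
    · intro x y
      obtain ⟨a, rfl⟩ := hall x
      obtain ⟨b, rfl⟩ := hall y
      refine ⟨b + a * (2 * k - 1), ?_⟩
      rw [← Equiv.Perm.mul_apply, ← pow_add]
      have hab : b + a * (2 * k - 1) + a = b + 2 * k * a := by
        have h1 := mul_pred_add a (2 * k) (by omega)
        omega
      rw [hab, pow_add, Equiv.Perm.mul_apply, h2kmul a]
    · intro x j hj
      obtain ⟨a, rfl⟩ := hall x
      have hjv : (τ ^ j) v₀ = v₀ := by
        apply (τ ^ a).injective
        rw [hcomm, hj]
      have hproj : ((levelPerm n γ) ^ j) (proj n v₀) = proj n v₀ := by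
        rw [← proj_pow, hjv]
      obtain ⟨m, rfl⟩ := h2 _ j hproj
      rcases Nat.even_or_odd m with ⟨q, rfl⟩ | ⟨q, rfl⟩
      · exact ⟨q, by rw [pow_succ, ← hkdef]; ring⟩
      · exfalso
        have hflip : (τ ^ (k * (2 * q + 1))) v₀ = flipVec n v₀ := by
          rw [show k * (2 * q + 1) = 2 * k * q + k from by ring, pow_add,
            Equiv.Perm.mul_apply, hB, pow_flipVec, h2kmul]
        exact flipVec_ne n v₀ (hflip.symm.trans hjv)
    · intro x
      obtain ⟨a, rfl⟩ := hall x
      rw [hcomm]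
      have h1 := h2kmul 1
      rw [mul_one] at h1
      rw [show (2 : ℕ) ^ (n + 1) = 2 * k from by rw [hkdef, pow_succ]; ring, h1]

lemma Pprop_odometer (γ : TreeAut) (n : ℕ) (hn : 1 ≤ n) (h : Pprop γ n) :
    (levelPerm n γ).IsCycle ∧ (levelPerm n γ).support = Finset.univ := by
  obtain ⟨h1, h2, _⟩ := h
  have hmove : ∀ x, levelPerm n γ x ≠ x := by
    intro x hx
    have hd := h2 x 1 (by simpa using hx)
    have hle := Nat.le_of_dvd one_pos hd
    have h2n : 2 ≤ 2 ^ n := by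
      calc 2 = 2 ^ 1 := (pow_one 2).symm
        _ ≤ 2 ^ n := Nat.pow_le_pow_right (by norm_num) hn
    omega
  have x0 : List.Vector Bool n := ⟨List.replicate n false, by simp⟩
  refine ⟨⟨x0, hmove x0, fun y _ => ?_⟩, ?_⟩
  · obtain ⟨i, hi⟩ := h1 x0 y
    exact ⟨(i : ℤ), by simpa [zpow_natCast] using hi⟩
  · exact Finset.eq_univ_iff_forall.mpr fun x => Equiv.Perm.mem_support.mpr (hmove x)

end Main

/-- `γ ∈ Ω` is an odometer iff `sgn_n(γ) = -1` for all `n ≥ 1`. -/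
theorem odometer_iff_sgn_neg_one (γ : TreeAut) :
    IsOdometer γ ↔ ∀ n : ℕ, 1 ≤ n → sgn n γ = -1 := by
  constructor
  · intro h n hn
    obtain ⟨hc, hsup⟩ := h n hn
    have hsgn : sgn n γ = Equiv.Perm.sign (levelPerm n γ) := rfl
    rw [hsgn, hc.sign, hsup, Finset.card_univ, card_vector, Fintype.card_bool]
    have he : Even (2 ^ n) := (Nat.even_pow).mpr ⟨even_two, by omega⟩
    rw [Even.neg_one_pow he]
  · intro h
    have hP : ∀ m, Pprop γ m := by
      intro m
      induction m with
      | zero => exact Pprop_zero γ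
      | succ m ih => exact Pprop_step γ m ih (h (m+1) (by omega))
    intro n hn
    exact Pprop_odometer γ n hn (hP n)


end BinTree
end

section
/- For the recursively defined generators a₁,…,a_r with parameters r ≥ 3 and 1 < s ≤ r, the sign of a_i on level n satisfies: sgn_n(a_i) = −1 if n ≡ i (mod r) or n ≡ i + 1 − s (mod r), and sgn_n(a_i) = +1 otherwise. -/
namespace BinTree

/-! ### Auxiliary lemmas -/

/-- Splitting a vector of length `n+1` by its head. -/
def splitEquiv (n : ℕ) :
    List.Vector Bool (n+1) ≃ (List.Vector Bool n ⊕ List.Vector Bool n) where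
  toFun v := cond v.head (Sum.inr v.tail) (Sum.inl v.tail)
  invFun x := Sum.elim (List.Vector.cons false) (List.Vector.cons true) x
  left_inv v := by
    cases hb : v.head <;>
      simp only [hb, cond_false, cond_true, Sum.elim_inl, Sum.elim_inr] <;>
      rw [← hb, List.Vector.cons_head_tail]
  right_inv x := by
    rcases x with w | w <;>
      simp [List.Vector.head_cons, List.Vector.tail_cons]

lemma splitEquiv_mk (n : ℕ) (x : Bool) (l : List Bool) (h : (x :: l).length = n + 1) :
    splitEquiv n ⟨x :: l, h⟩ =
      cond x (Sum.inr ⟨l, by simpa using h⟩) (Sum.inl ⟨l, by simpa using h⟩) := by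
  cases x <;> rfl

lemma splitEquiv_symm_inl (n : ℕ) (w : List.Vector Bool n) :
    (splitEquiv n).symm (Sum.inl w) = List.Vector.cons false w := rfl

lemma splitEquiv_symm_inr (n : ℕ) (w : List.Vector Bool n) :
    (splitEquiv n).symm (Sum.inr w) = List.Vector.cons true w := rfl

lemma levelPerm_wr_false (n : ℕ) (g h : TreeAut) :
    levelPerm (n+1) (wr g h false) =
      (splitEquiv n).symm.permCongr (Equiv.sumCongr (levelPerm n g) (levelPerm n h)) := by
  apply Equiv.ext
  rintro ⟨l, hl⟩
  rcases l with _ | ⟨x, l⟩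
  · exact absurd hl (by simp)
  · apply Subtype.ext
    cases x <;>
      simp [levelPerm, Equiv.permCongr_apply, Equiv.symm_symm, splitEquiv_mk,
        splitEquiv_symm_inl, splitEquiv_symm_inr, wr, wrPerm, wrFun,
        List.Vector.cons] <;> rfl

lemma levelPerm_wr_true (n : ℕ) (g h : TreeAut) :
    levelPerm (n+1) (wr g h true) =
      (splitEquiv n).symm.permCongr
        ((Equiv.sumCongr (levelPerm n g) (levelPerm n h)).trans
          (Equiv.sumComm _ _)) := by
  apply Equiv.ext
  rintro ⟨l, hl⟩
  rcases l with _ | ⟨x, l⟩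
  · exact absurd hl (by simp)
  · apply Subtype.ext
    cases x <;>
      simp [levelPerm, Equiv.permCongr_apply, Equiv.symm_symm, splitEquiv_mk,
        splitEquiv_symm_inl, splitEquiv_symm_inr, wr, wrPerm, wrFun,
        List.Vector.cons] <;> rfl

lemma sign_sumComm (α : Type*) [DecidableEq α] [Fintype α] :
    Equiv.Perm.sign (Equiv.sumComm α α) = (-1) ^ (Fintype.card α) := by
  have hconj : Equiv.sumComm α α =
      ((Equiv.prodComm α Bool).trans (Equiv.boolProdEquivSum α)).permCongr
        (Equiv.prodCongrRight (fun _ : α => Equiv.swap false true)) := by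
    ext x
    rcases x with a | a <;>
      simp [Equiv.permCongr_apply, Equiv.prodCongrRight, Equiv.swap_apply_of_ne_of_ne]
  rw [hconj, Equiv.Perm.sign_permCongr, Equiv.Perm.sign_prodCongrRight]
  simp [Equiv.Perm.sign_swap (by decide : (false : Bool) ≠ true)]

lemma sgn_zero (γ : TreeAut) : sgn 0 γ = 1 := by
  have key : levelPerm 0 γ = 1 := by
    apply Equiv.ext
    rintro ⟨l, hl⟩
    apply Subtype.ext
    have hnil : l = [] := List.length_eq_zero_iff.mp hl
    subst hnil
    have h : IsTreeAutFun ⇑γ.1 := γ.2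
    exact List.length_eq_zero_iff.mp (h.1 [])
  rw [sgn, key, map_one]

lemma sgn_one_aut (n : ℕ) : sgn n (1 : TreeAut) = 1 := by
  have key : levelPerm n (1 : TreeAut) = 1 := Equiv.ext fun v => Subtype.ext rfl
  rw [sgn, key, map_one]

lemma sgn_wr_false (n : ℕ) (g h : TreeAut) :
    sgn (n+1) (wr g h false) = sgn n g * sgn n h := by
  rw [sgn, levelPerm_wr_false, Equiv.Perm.sign_permCongr, Equiv.Perm.sign_sumCongr]
  rfl

lemma sgn_wr_true (n : ℕ) (g h : TreeAut) :
    sgn (n+1) (wr g h true) = (-1) ^ (2 ^ n) * (sgn n g * sgn n h) := by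
  rw [sgn, levelPerm_wr_true, Equiv.Perm.sign_permCongr]
  have : (Equiv.sumCongr (levelPerm n g) (levelPerm n h)).trans
      (Equiv.sumComm (List.Vector Bool n) (List.Vector Bool n)) =
      (Equiv.sumComm (List.Vector Bool n) (List.Vector Bool n) : Equiv.Perm _) *
        Equiv.sumCongr (levelPerm n g) (levelPerm n h) := rfl
  rw [this, map_mul, Equiv.Perm.sign_sumCongr, sign_sumComm, card_vector,
    Fintype.card_bool]
  rfl

lemma sgn_one_wr_true (g h : TreeAut) : sgn 1 (wr g h true) = -1 := by
  rw [show (1 : ℕ) = 0 + 1 from rfl, sgn_wr_true, sgn_zero, sgn_zero]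
  norm_num

lemma sgn_one_wr_false (g h : TreeAut) : sgn 1 (wr g h false) = 1 := by
  rw [show (1 : ℕ) = 0 + 1 from rfl, sgn_wr_false, sgn_zero, sgn_zero, mul_one]

lemma sgn_succ_wr_true (n : ℕ) (hn : 1 ≤ n) (g h : TreeAut) :
    sgn (n+1) (wr g h true) = sgn n g * sgn n h := by
  rw [sgn_wr_true]
  obtain ⟨m, rfl⟩ := Nat.exists_eq_add_of_le hn
  have heven : Even (2 ^ (1 + m)) := ⟨2 ^ m, by ring⟩
  rw [heven.neg_one_pow, one_mul]

lemma cast_eq_iff {r : ℕ} (hr : 0 < r) {a b : ℕ} (ha : a < r) (hb : b < r) :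
    ((a : ZMod r) = (b : ZMod r)) ↔ a = b := by
  haveI : NeZero r := ⟨hr.ne'⟩
  constructor
  · intro h
    have := congrArg ZMod.val h
    rwa [ZMod.val_natCast_of_lt ha, ZMod.val_natCast_of_lt hb] at this
  · rintro rfl; rfl

/-- sgn_n(a_i) = −1 iff n ≡ i or n ≡ i + 1 − s (mod r). -/
theorem sgn_gens
    (r s : ℕ) (hr : 3 ≤ r) (hs1 : 1 < s) (hsr : s ≤ r)
    (a : ZMod r → TreeAut)
    (ha1 : a 1 = wr (a (r : ZMod r)) 1 true)
    (hmid : ∀ i : ℕ, 2 ≤ i → i ≤ s - 1 → a (i : ZMod r) = wr 1 (a ((i - 1 : ℕ) : ZMod r)) false)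
    (has : a (s : ZMod r) = wr 1 (a ((s - 1 : ℕ) : ZMod r)) true)
    (hhi : ∀ i : ℕ, s + 1 ≤ i → i ≤ r → a (i : ZMod r) = wr (a ((i - 1 : ℕ) : ZMod r)) 1 false)
    :
    ∀ i : ℕ, 1 ≤ i → i ≤ r → ∀ n : ℕ, 1 ≤ n →
      sgn n (a (i : ZMod r)) =
        (if (n : ZMod r) = (i : ZMod r) ∨ (n : ZMod r) = (i : ZMod r) + 1 - (s : ZMod r)
          then -1 else 1) := by
  have hr0 : 0 < r := by omega
  have hrr : (r : ZMod r) = 0 := ZMod.natCast_self r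
  suffices H : ∀ n : ℕ, 1 ≤ n → ∀ i : ℕ, 1 ≤ i → i ≤ r →
      sgn n (a (i : ZMod r)) =
        (if (n : ZMod r) = (i : ZMod r) ∨ (n : ZMod r) = (i : ZMod r) + 1 - (s : ZMod r)
          then -1 else 1) by
    exact fun i hi1 hir n hn => H n hn i hi1 hir
  intro n hn
  induction n, hn using Nat.le_induction with
  | base =>
    intro i hi1 hir
    by_cases h1 : i = 1
    · subst h1
      rw [Nat.cast_one, ha1, sgn_one_wr_true, if_pos (Or.inl rfl)]
    · by_cases h3 : i = s
      · subst h3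
        rw [has, sgn_one_wr_true, if_pos (Or.inr (by push_cast; ring))]
      · by_cases h2 : i ≤ s - 1
        · rw [hmid i (by omega) h2, sgn_one_wr_false]
          rw [if_neg]
          rintro (hD | hD)
          · have : (1 : ℕ) = i := (cast_eq_iff hr0 (by omega : 1 < r) (by omega : i < r)).mp hD
            omega
          · have hsi : (s : ZMod r) = (i : ZMod r) := by push_cast at hD; linear_combination hD
            rcases eq_or_lt_of_le hsr with heq | hslt
            · rw [heq, hrr] at hsi
              have : i = 0 := (cast_eq_iff hr0 (by omega : i < r) hr0).mp
                (by rw [Nat.cast_zero]; exact hsi.symm)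
              omega
            · exact absurd ((cast_eq_iff hr0 hslt (by omega)).mp hsi) (by omega)
        · -- s + 1 ≤ i ≤ r
          rw [hhi i (by omega) hir, sgn_one_wr_false]
          rw [if_neg]
          rintro (hD | hD)
          · rcases eq_or_lt_of_le hir with heq | hilt
            · rw [heq, hrr] at hD
              have : (1 : ℕ) = 0 := (cast_eq_iff hr0 (by omega : 1 < r) hr0).mp
                (by rw [Nat.cast_zero]; exact hD)
              omega
            · have : (1 : ℕ) = i := (cast_eq_iff hr0 (by omega : 1 < r) hilt).mp hD
              omega
          · have hsi : (s : ZMod r) = (i : ZMod r) := by push_cast at hD; linear_combination hD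
            rcases eq_or_lt_of_le hir with heq | hilt
            · rw [heq, hrr] at hsi
              have : s = 0 := (cast_eq_iff hr0 (by omega : s < r) hr0).mp
                (by rw [Nat.cast_zero]; exact hsi)
              omega
            · exact absurd ((cast_eq_iff hr0 (by omega : s < r) hilt).mp hsi) (by omega)
  | succ n hn ih =>
    intro i hi1 hir
    by_cases h1 : i = 1
    · subst h1
      rw [Nat.cast_one, ha1, sgn_succ_wr_true n hn, sgn_one_aut, mul_one,
        ih r (by omega) le_rfl]
      apply if_congr _ rfl rfl
      push_cast
      rw [hrr]
      constructor <;> rintro (h | h)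
      · left; linear_combination h
      · right; linear_combination h
      · left; linear_combination h
      · right; linear_combination h
    · by_cases h3 : i = s
      · subst h3
        rw [has, sgn_succ_wr_true n hn, sgn_one_aut, one_mul,
          ih (i - 1) (by omega) (by omega)]
        apply if_congr _ rfl rfl
        obtain ⟨k, rfl⟩ : ∃ k, i = k + 1 := ⟨i - 1, by omega⟩
        simp only [Nat.add_sub_cancel]
        push_cast
        constructor <;> rintro (h | h)
        · left; linear_combination h
        · right; linear_combination h
        · left; linear_combination h
        · right; linear_combination h
      · by_cases h2 : i ≤ s - 1
        · rw [hmid i (by omega) h2, sgn_wr_false, sgn_one_aut, one_mul,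
            ih (i - 1) (by omega) (by omega)]
          apply if_congr _ rfl rfl
          obtain ⟨k, rfl⟩ : ∃ k, i = k + 1 := ⟨i - 1, by omega⟩
          simp only [Nat.add_sub_cancel]
          push_cast
          constructor <;> rintro (h | h)
          · left; linear_combination h
          · right; linear_combination h
          · left; linear_combination h
          · right; linear_combination h
        · rw [hhi i (by omega) hir, sgn_wr_false, sgn_one_aut, mul_one,
            ih (i - 1) (by omega) (by omega)]
          apply if_congr _ rfl rfl
          obtain ⟨k, rfl⟩ : ∃ k, i = k + 1 := ⟨i - 1, by omega⟩
          simp only [Nat.add_sub_cancel]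
          push_cast
          constructor <;> rintro (h | h)
          · left; linear_combination h
          · right; linear_combination h
          · left; linear_combination h
          · right; linear_combination h


end BinTree
end

section
/- Let G be a closed subgroup of Ω, and let H be a closed subgroup of G such that the level-n quotient G_n/H_n is cyclic for all n ≥ 1. Then the order of G_{n+1}/H_{n+1} is at most twice the order of G_n/H_n, where G_n, H_n denote the images of G, H in the automorphism group Ω_n of the finite tree of depth n. -/
namespace BinTree

lemma levelPerm_eq_one_iff {n : ℕ} {γ : TreeAut} :
    levelPerm n γ = 1 ↔ ∀ l : List Bool, l.length = n → γ.1 l = l := by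
  constructor
  · intro h l hl
    have := congrArg (fun e : Equiv.Perm (List.Vector Bool n) =>
      (e ⟨l, hl⟩ : List.Vector Bool n).1) h
    exact this
  · intro h
    apply Equiv.ext
    intro v
    exact Subtype.ext (h v.1 v.2)

lemma ker_level_succ {n : ℕ} {γ : TreeAut} (h : levelPerm (n + 1) γ = 1) :
    levelPerm n γ = 1 := by
  rw [levelPerm_eq_one_iff] at h ⊢
  intro l hl
  have h1 : γ.1 (l ++ [false]) = l ++ [false] := h _ (by simp [hl])
  have h2 := γ.2.2 l [false]
  rw [h1] at h2
  simpa using h2.symm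

lemma involution_of_ker {n : ℕ} {γ : TreeAut} (h : levelPerm n γ = 1) :
    levelPerm (n + 1) γ * levelPerm (n + 1) γ = 1 := by
  rw [levelPerm_eq_one_iff] at h
  have key : ∀ l : List Bool, l.length = n + 1 → γ.1 (γ.1 l) = l := by
    intro l hl
    have hne : l ≠ [] := by intro hc; simp [hc] at hl
    set w := l.dropLast with hwdef
    have hw : w.length = n := by
      simp [hwdef, List.length_dropLast, hl]
    obtain ⟨b, hb⟩ : ∃ b : Bool, l = w ++ [b] :=
      ⟨l.getLast hne, (List.dropLast_append_getLast hne).symm⟩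
    have hwfix : γ.1 w = w := h w hw
    have hform : ∀ c : Bool, ∃ c' : Bool, γ.1 (w ++ [c]) = w ++ [c'] := by
      intro c
      have hlen : (γ.1 (w ++ [c])).length = n + 1 := by
        rw [γ.2.1]; simp [hw]
      have hpre : (γ.1 (w ++ [c])).take n = w := by
        have := γ.2.2 w [c]
        rw [hwfix, hw] at this
        exact this
      have hdrop : ((γ.1 (w ++ [c])).drop n).length = 1 := by
        rw [List.length_drop, hlen]
        omega
      obtain ⟨c', hc'⟩ := List.length_eq_one_iff.mp hdrop
      exact ⟨c', by rw [← List.take_append_drop n (γ.1 (w ++ [c])), hpre, hc']⟩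
    obtain ⟨c, hc⟩ := hform b
    obtain ⟨e, he⟩ := hform c
    rw [hb, hc, he]
    by_cases hcb : c = b
    · subst hcb
      rw [← he, hc]
    · have hec : e = b ∨ e = c := by
        cases b <;> cases c <;> cases e <;>
          first | exact Or.inl rfl | exact Or.inr rfl | exact absurd rfl hcb
      rcases hec with hec | hec
      · rw [hec]
      · exfalso
        apply hcb
        have hinj := γ.1.injective
        have : w ++ [c] = w ++ [b] := hinj (by rw [he, hc, hec])
        simpa using this
  apply Equiv.ext
  intro v
  exact Subtype.ext (key v.1 v.2)

/-- for closed subgroups `H ⊴ G ≤ Ω` with all level quotients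
`G_n/H_n` cyclic, the order of `G_{n+1}/H_{n+1}` is at most twice that of
`G_n/H_n`.  (Cyclicity of `G_n/H_n` is expressed by a single coset generating all
cosets; the order of `G_n/H_n` is `relIndex H_n G_n`.) -/
theorem level_quotient_growth (G H : Subgroup TreeAut)
    (hGclosed : IsClosed (G : Set TreeAut)) (hHclosed : IsClosed (H : Set TreeAut))
    (hHG : H ≤ G) (hnorm : ∀ g ∈ G, ∀ h ∈ H, g * h * g⁻¹ ∈ H)
    (hcyc : ∀ n : ℕ, 1 ≤ n → ∃ g ∈ Subgroup.map (levelHom n) G,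
      ∀ x ∈ Subgroup.map (levelHom n) G, ∃ m : ℤ,
        x * (g ^ m)⁻¹ ∈ Subgroup.map (levelHom n) H) :
    ∀ n : ℕ, 1 ≤ n →
      (Subgroup.map (levelHom (n + 1)) H).relIndex (Subgroup.map (levelHom (n + 1)) G) ≤
        2 * (Subgroup.map (levelHom n) H).relIndex (Subgroup.map (levelHom n) G) := by
  intro n hn
  classical
  set f := levelHom n with hf
  set f' := levelHom (n + 1) with hf'
  set Gm := Subgroup.map f' G with hGm
  set Hm := Subgroup.map f' H with hHm
  set Gn := Subgroup.map f G with hGn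
  set Hn := Subgroup.map f H with hHn
  -- normality of the images
  have hnormM : ∀ a ∈ Gm, ∀ b ∈ Hm, a * b * a⁻¹ ∈ Hm := by
    rintro a ⟨g0, hg0, rfl⟩ b ⟨h0, hh0, rfl⟩
    refine ⟨g0 * h0 * g0⁻¹, hnorm g0 hg0 h0 hh0, by simp⟩
  -- the subgroup A = preimage of H_{n+1}, B = preimage of H_n
  set A := Hm.comap f' with hA
  set B := Hn.comap f with hB
  have hAB : A ≤ B := by
    rintro x hx
    obtain ⟨h0, hh0, hfh⟩ := hx
    have hker : levelPerm n (h0⁻¹ * x) = 1 := by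
      apply ker_level_succ
      have : f' (h0⁻¹ * x) = 1 := by
        rw [map_mul, map_inv, hfh]
        simp
      exact this
    have : f (h0⁻¹ * x) = 1 := hker
    have h2 : (f h0)⁻¹ * f x = 1 := by simpa [map_mul] using this
    exact ⟨h0, hh0, inv_mul_eq_one.mp h2⟩
  set M := B ⊓ G with hM
  -- the quotient group Q = G_{n+1}/H_{n+1}
  set N := Hm.subgroupOf Gm with hNdef
  have hN : N.Normal := by
    constructor
    intro b hb g
    rw [hNdef, Subgroup.mem_subgroupOf] at hb ⊢
    have : (g * b * g⁻¹ : ↥Gm).1 = g.1 * b.1 * g.1⁻¹ := rfl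
    rw [this]
    exact hnormM g.1 g.2 b.1 hb
  haveI := hN
  -- Q is finite
  haveI : Finite (List.Vector Bool (n + 1)) := inferInstance
  haveI : Finite (↥Gm) := inferInstance
  haveI hQfin : Finite (↥Gm ⧸ N) := Quotient.finite _
  -- Q is cyclic
  obtain ⟨g, hgGm, hgen⟩ := hcyc (n + 1) (by omega)
  haveI hQcyc : IsCyclic (↥Gm ⧸ N) := by
    refine ⟨⟨QuotientGroup.mk ⟨g, hgGm⟩, fun q => ?_⟩⟩
    obtain ⟨x, rfl⟩ := QuotientGroup.mk_surjective q
    obtain ⟨m, hm⟩ := hgen x.1 x.2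
    refine ⟨m, ?_⟩
    show (QuotientGroup.mk (⟨g, hgGm⟩ : ↥Gm) : ↥Gm ⧸ N) ^ m = QuotientGroup.mk x
    rw [← QuotientGroup.mk_zpow]
    rw [QuotientGroup.eq]
    rw [hNdef, Subgroup.mem_subgroupOf]
    have hcoe : ((⟨g, hgGm⟩ : ↥Gm) ^ m : ↥Gm).1 = g ^ m := by
      push_cast
      rfl
    have hval : (((⟨g, hgGm⟩ : ↥Gm) ^ m)⁻¹ * x : ↥Gm).1 = (g ^ m)⁻¹ * x.1 := by
      simp [hcoe]
    rw [hval]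
    have hgm : g ^ m ∈ Gm := Subgroup.zpow_mem Gm hgGm m
    have : (g ^ m)⁻¹ * (x.1 * (g ^ m)⁻¹) * ((g ^ m)⁻¹)⁻¹ ∈ Hm :=
      hnormM _ (Subgroup.inv_mem Gm hgm) _ hm
    simpa [mul_assoc] using this
  -- the homomorphism ψ : M → Q
  let φ : ↥M →* ↥Gm :=
    { toFun := fun x => ⟨f' x.1, Subgroup.mem_map_of_mem f' (Subgroup.mem_inf.mp x.2).2⟩
      map_one' := by ext; simp
      map_mul' := by intro a b; ext; simp }
  let ψ : ↥M →* (↥Gm ⧸ N) := (QuotientGroup.mk' N).comp φ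
  -- kernel of ψ is A ∩ M
  have hker : A.subgroupOf M = ψ.ker := by
    ext x
    rw [Subgroup.mem_subgroupOf, MonoidHom.mem_ker]
    show x.1 ∈ A ↔ QuotientGroup.mk (φ x) = 1
    rw [QuotientGroup.eq_one_iff, hNdef, Subgroup.mem_subgroupOf]
    rfl
  -- every element of the range of ψ squares to 1
  have hsq : ∀ x : ↥M, (ψ x) ^ 2 = 1 := by
    intro x
    have hxB : x.1 ∈ B := (Subgroup.mem_inf.mp x.2).1
    have hxG : x.1 ∈ G := (Subgroup.mem_inf.mp x.2).2
    obtain ⟨h0, hh0, hfh⟩ := hxB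
    set k := x.1 * h0⁻¹ with hk
    have hkG : k ∈ G := Subgroup.mul_mem G hxG (Subgroup.inv_mem G (hHG hh0))
    have hkker : levelPerm n k = 1 := by
      have : f k = 1 := by
        rw [hk, map_mul, map_inv, hfh]
        simp
      exact this
    have hinv := involution_of_ker hkker
    set a := f' k with ha
    set b := f' h0 with hbdef
    have haa : a * a = 1 := hinv
    have hainv : a⁻¹ = a := by
      rw [inv_eq_iff_mul_eq_one, haa]
    have hxval : f' x.1 = a * b := by
      rw [ha, hbdef, ← map_mul, hk]
      simp
    have hsq2 : f' x.1 * f' x.1 ∈ Hm := by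
      rw [hxval]
      have hrw : a * b * (a * b) = (a * b * a⁻¹) * b := by
        rw [hainv]
        group
      rw [hrw]
      have h1 : a * b * a⁻¹ = f' (k * h0 * k⁻¹) := by
        rw [ha, hbdef]; simp
      have h2 : k * h0 * k⁻¹ ∈ H := hnorm k hkG h0 hh0
      rw [h1]
      exact Subgroup.mul_mem Hm ⟨_, h2, rfl⟩ ⟨h0, hh0, rfl⟩
    show ((QuotientGroup.mk' N) (φ x)) ^ 2 = 1
    rw [← map_pow, QuotientGroup.mk'_apply, QuotientGroup.eq_one_iff, hNdef,
      Subgroup.mem_subgroupOf]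
    have : ((φ x) ^ 2 : ↥Gm).1 = f' x.1 * f' x.1 := by
      rw [pow_two]
      rfl
    rw [this]
    exact hsq2
  -- the range of ψ has at most 2 elements
  have hrange : Nat.card ψ.range ≤ 2 := by
    haveI : Fintype (↥Gm ⧸ N) := Fintype.ofFinite _
    have hsub : (ψ.range : Set (↥Gm ⧸ N)) ⊆ {q : ↥Gm ⧸ N | q ^ 2 = 1} := by
      rintro q ⟨x, rfl⟩
      exact hsq x
    calc Nat.card ψ.range ≤ Nat.card {q : ↥Gm ⧸ N | q ^ 2 = 1} :=
          Nat.card_mono (Set.toFinite _) hsub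
      _ ≤ 2 := by
          rw [Nat.card_eq_fintype_card]
          have hle := IsCyclic.card_pow_eq_one_le (α := ↥Gm ⧸ N) (n := 2) (by norm_num)
          calc Fintype.card {q : ↥Gm ⧸ N | q ^ 2 = 1}
              = ({q : ↥Gm ⧸ N | q ^ 2 = 1} : Set (↥Gm ⧸ N)).toFinset.card :=
                (Set.toFinset_card _).symm
            _ ≤ 2 := by
                refine le_trans (le_of_eq ?_) hle
                rw [Set.toFinset_setOf]
  -- the index bound for the middle step
  have hmid : A.relIndex M ≤ 2 := by
    rw [Subgroup.relIndex, hker, Subgroup.index_ker]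
    exact hrange
  -- assemble
  have e1 : Hm.relIndex Gm = A.relIndex G := by
    rw [hA, Subgroup.relIndex_comap]
  have e2 : Hn.relIndex Gn = B.relIndex G := by
    rw [hB, Subgroup.relIndex_comap]
  have hAM : A ⊓ M = A ⊓ G := by
    rw [hM, ← inf_assoc, inf_eq_left.mpr hAB]
  have echain : (A ⊓ M).relIndex M * M.relIndex G = (A ⊓ M).relIndex G :=
    Subgroup.relIndex_mul_relIndex _ _ _ (le_trans inf_le_right le_rfl) inf_le_right
  calc Hm.relIndex Gm = A.relIndex G := e1
    _ = (A ⊓ G).relIndex G := (Subgroup.inf_relIndex_right A G).symm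
    _ = (A ⊓ M).relIndex G := by rw [hAM]
    _ = (A ⊓ M).relIndex M * M.relIndex G := echain.symm
    _ = A.relIndex M * B.relIndex G := by
        rw [Subgroup.inf_relIndex_right A M, hM, Subgroup.inf_relIndex_right B G]
    _ ≤ 2 * B.relIndex G := Nat.mul_le_mul_right _ hmid
    _ = 2 * Hn.relIndex Gn := by rw [e2]

end BinTree
end
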